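/- Let N ≥ 1 and let l be a duplicate-free list of elements of Fin N with l.length < N. Then the set of permutations of Fin N extending l is the union, over all elements i of Fin N not appearing in l, of the sets of permutations extending l ++ [i], and these sets are pairwise disjoint for distinct i. Consequently, for any J : Equiv.Perm (Fin N) → ℝ, the minimum of J over permutations extending l equals the minimum, over i not in l, of the minimum of J over permutations extending l ++ [i]. (Correctness of the branching step of Branch and Play.) -/

import Mathlib

/-- A permutation `p` of `Fin N` extends the (incomplete) permutation given by the
list `l` if `p m = l.get m` for every index `m < l.length`. -/
def ExtendsList {N : ℕ} (p : Equiv.Perm (Fin N)) (l : List (Fin N)) : Prop :=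
  ∀ (m : ℕ) (hm : m < l.length) (hN : m < N), p ⟨m, hN⟩ = l.get ⟨m, hm⟩

lemma exists_perm_extends {N : ℕ} (l : List (Fin N)) (hl : l.Nodup) (hlen : l.length ≤ N) :
    ∃ p : Equiv.Perm (Fin N), ExtendsList p l := by
  classical
  set k := l.length with hk
  let f : {x : Fin N // (x : ℕ) < k} → {x : Fin N // x ∈ l} :=
    fun x => ⟨l.get ⟨(x : Fin N), x.2⟩, l.get_mem _⟩
  have hinj : Function.Injective f := by
    intro a b hab
    have hget := List.nodup_iff_injective_get.mp hl
    have h2 : (⟨((a : Fin N) : ℕ), a.2⟩ : Fin k) = ⟨((b : Fin N) : ℕ), b.2⟩ :=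
      hget (Subtype.ext_iff.mp hab)
    have : ((a : Fin N) : ℕ) = ((b : Fin N) : ℕ) := by simpa using h2
    exact Subtype.ext (Fin.ext this)
  have hcard : Fintype.card {x : Fin N // (x : ℕ) < k} = Fintype.card {x : Fin N // x ∈ l} := by
    have e1 : {x : Fin N // (x : ℕ) < k} ≃ Fin k :=
      { toFun := fun x => ⟨(x : Fin N), x.2⟩
        invFun := fun m => ⟨⟨m, lt_of_lt_of_le m.2 hlen⟩, m.2⟩
        left_inv := fun x => rfl
        right_inv := fun m => rfl }
    have e2 : {x : Fin N // x ∈ l} ≃ {x : Fin N // x ∈ l.toFinset} :=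
      Equiv.subtypeEquivRight (by simp)
    rw [Fintype.card_congr e1, Fintype.card_congr e2, Fintype.card_coe,
      List.toFinset_card_of_nodup hl, Fintype.card_fin]
  have hbij : Function.Bijective f := (Fintype.bijective_iff_injective_and_card f).mpr ⟨hinj, hcard⟩
  let e := Equiv.ofBijective f hbij
  refine ⟨e.extendSubtype, ?_⟩
  intro m hm hN
  have hmem : ((⟨m, hN⟩ : Fin N) : ℕ) < k := hm
  have := Equiv.extendSubtype_apply_of_mem e ⟨m, hN⟩ hmem
  rw [this]
  rfl

lemma extends_append {N : ℕ} (p : Equiv.Perm (Fin N)) (l : List (Fin N)) (i : Fin N)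
    (h : l.length < N) :
    ExtendsList p (l ++ [i]) ↔ ExtendsList p l ∧ p ⟨l.length, h⟩ = i := by
  constructor
  · intro hp
    constructor
    · intro m hm hN
      have hm' : m < (l ++ [i]).length := by simp; omega
      have := hp m hm' hN
      rwa [List.get_eq_getElem, List.getElem_append_left hm] at this
    · have hm' : l.length < (l ++ [i]).length := by simp
      have := hp l.length hm' h
      rw [this]
      simp [List.getElem_append_right]
  · rintro ⟨h1, h2⟩ m hm hN
    simp only [List.length_append, List.length_singleton] at hm
    rcases lt_or_eq_of_le (Nat.lt_succ_iff.mp hm) with hlt | heq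
    · rw [List.get_eq_getElem, List.getElem_append_left hlt]
      exact h1 m hlt hN
    · subst heq
      simp only [List.get_eq_getElem, List.getElem_append_right (le_refl l.length)]
      simpa using h2
  
lemma csInf_image_biUnion {ι : Type*} (S : Set ι) (hS : S.Finite) (hSne : S.Nonempty)
    (A : ι → Set ℝ) (hfin : ∀ i ∈ S, (A i).Finite) (hne : ∀ i ∈ S, (A i).Nonempty) :
    sInf (⋃ i ∈ S, A i) = sInf ((fun i => sInf (A i)) '' S) := by
  have hUfin : (⋃ i ∈ S, A i).Finite := Set.Finite.biUnion hS hfin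
  have hUne : (⋃ i ∈ S, A i).Nonempty := by
    obtain ⟨i, hi⟩ := hSne
    obtain ⟨x, hx⟩ := hne i hi
    exact ⟨x, Set.mem_biUnion hi hx⟩
  apply le_antisymm
  · apply le_csInf (hSne.image _)
    rintro b ⟨i, hi, rfl⟩
    exact csInf_le_csInf hUfin.bddBelow (hne i hi) (Set.subset_biUnion_of_mem hi)
  · obtain ⟨i, hi, hx⟩ := Set.mem_iUnion₂.mp (hUne.csInf_mem hUfin)
    calc sInf ((fun i => sInf (A i)) '' S) ≤ sInf (A i) :=
          csInf_le ((hS.image _).bddBelow) (Set.mem_image_of_mem _ hi)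
      _ ≤ sInf (⋃ i ∈ S, A i) := csInf_le (hfin i hi).bddBelow hx

/-- Correctness of the branching step of Branch and Play. -/
theorem branching_correct (N : ℕ) (hN : 1 ≤ N)
    (l : List (Fin N)) (hl : l.Nodup) (hlen : l.length < N)
    (J : Equiv.Perm (Fin N) → ℝ) :
    ({p : Equiv.Perm (Fin N) | ExtendsList p l} =
      ⋃ i ∈ {i : Fin N | i ∉ l}, {p : Equiv.Perm (Fin N) | ExtendsList p (l ++ [i])}) ∧
    (∀ i : Fin N, i ∉ l → ∀ j : Fin N, j ∉ l → i ≠ j →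
      Disjoint {p : Equiv.Perm (Fin N) | ExtendsList p (l ++ [i])}
        {p : Equiv.Perm (Fin N) | ExtendsList p (l ++ [j])}) ∧
    sInf (J '' {p : Equiv.Perm (Fin N) | ExtendsList p l}) =
      sInf ((fun i : Fin N =>
        sInf (J '' {p : Equiv.Perm (Fin N) | ExtendsList p (l ++ [i])})) ''
        {i : Fin N | i ∉ l}) := by
  classical
  have hunion : {p : Equiv.Perm (Fin N) | ExtendsList p l} =
      ⋃ i ∈ {i : Fin N | i ∉ l}, {p : Equiv.Perm (Fin N) | ExtendsList p (l ++ [i])} := by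
    ext p
    simp only [Set.mem_setOf_eq, Set.mem_iUnion, exists_prop]
    constructor
    · intro hp
      refine ⟨p ⟨l.length, hlen⟩, ?_, (extends_append p l _ hlen).mpr ⟨hp, rfl⟩⟩
      intro hmem
      obtain ⟨⟨m, hm⟩, hget⟩ := List.mem_iff_get.mp hmem
      have hmN : m < N := hm.trans hlen
      have : p ⟨m, hmN⟩ = p ⟨l.length, hlen⟩ := by rw [hp m hm hmN, hget]
      have := p.injective this
      simp only [Fin.mk.injEq] at this
      omega
    · rintro ⟨i, _, hp⟩
      exact ((extends_append p l i hlen).mp hp).1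
  have hdisj : ∀ i : Fin N, i ∉ l → ∀ j : Fin N, j ∉ l → i ≠ j →
      Disjoint {p : Equiv.Perm (Fin N) | ExtendsList p (l ++ [i])}
        {p : Equiv.Perm (Fin N) | ExtendsList p (l ++ [j])} := by
    intro i _ j _ hij
    rw [Set.disjoint_left]
    intro p hpi hpj
    have h1 := ((extends_append p l i hlen).mp hpi).2
    have h2 := ((extends_append p l j hlen).mp hpj).2
    exact hij (h1 ▸ h2 ▸ rfl)
  refine ⟨hunion, hdisj, ?_⟩
  have hSne : ({i : Fin N | i ∉ l} : Set (Fin N)).Nonempty := by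
    by_contra h
    rw [Set.not_nonempty_iff_eq_empty, Set.eq_empty_iff_forall_notMem] at h
    simp only [Set.mem_setOf_eq, not_not] at h
    have hsub : (Finset.univ : Finset (Fin N)) ⊆ l.toFinset :=
      fun i _ => List.mem_toFinset.mpr (h i)
    have := Finset.card_le_card hsub
    rw [Finset.card_univ, Fintype.card_fin, List.toFinset_card_of_nodup hl] at this
    omega
  rw [hunion, Set.image_iUnion₂]
  apply csInf_image_biUnion _ (Set.toFinite _) hSne
  · intro i _
    exact (Set.toFinite _).image J
  · intro i hi
    have hnd : (l ++ [i]).Nodup := by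
      simp [List.nodup_append, hl]; exact fun a ha h => hi (h ▸ ha)
    obtain ⟨p, hp⟩ := exists_perm_extends (l ++ [i]) hnd (by simp; omega)
    exact ⟨J p, Set.mem_image_of_mem J hp⟩
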